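/- Let n = 2k be even with k ≥ 1, let d ≥ 1, and let p : {1,…,n} × {−n,…,n} → ℝ^d, h ∈ ℝ^d, K, Q ∈ ℝ^{d×d}, and 𝒩 : ℝ^d → ℝ be arbitrary, and suppose the resulting 1-layer single-token output transformer T computes SUM₂^{n,n} on all inputs. For α ∈ {0,1}^k, let a_i(α) = 2i if α_i = 1 and a_i(α) = 1 otherwise, set f_i = p(i, a_i(α)) for i = 1,…,k, and define x(α) = Σ_{i=1}^k e^{⟨K f_i, Q h⟩} f_i ∈ ℝ^d and s(α) = Σ_{i=1}^k e^{⟨K f_i, Q h⟩} ∈ ℝ. Let e_1,…,e_k ∈ {0,1}^k denote the standard basis vectors (e_i has a 1 exactly in position i). Then the hypothesis class H = { (x, s) ↦ 𝟙[𝒩(h + (x + y)/(s + q)) > 0] : (y, q) ∈ ℝ^d × ℝ } over domain ℝ^d × ℝ shatters the k points (x(e_1), s(e_1)), …, (x(e_k), s(e_k)); that is, for every β ∈ {0,1}^k there exist (y, q) ∈ ℝ^d × ℝ such that for all i ∈ {1,…,k}: 𝒩(h + (x(e_i) + y)/(s(e_i) + q)) > 0 if and only if β_i = 1. In particular, H has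 VC dimension at least n/2. -/

import Mathlib

/-- A 1-layer single-token output transformer of embedding dimension `d`
for input length `n` and alphabet `S`: a positional encoding `p`, an initial
value vector `h` of the output token, key and query matrices `K`, `Q`,
and an output function `N`. -/
structure Transformer (n d : ℕ) (S : Type*) where
  /-- positional encoding -/
  p : Fin n → S → (Fin d → ℝ)
  /-- initial value vector of the output token -/
  h : Fin d → ℝ
  /-- key matrix -/
  K : Matrix (Fin d) (Fin d) ℝ
  /-- query matrix -/
  Q : Matrix (Fin d) (Fin d) ℝ
  /-- output function -/
  N : (Fin d → ℝ) → ℝ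

/-- The attention weight `e^{⟨K f_i, Q h⟩}` of input token `i`, where `f_i = p(i, x_i)`. -/
noncomputable def Transformer.w {n d : ℕ} {S : Type*} (T : Transformer n d S)
    (x : Fin n → S) (i : Fin n) : ℝ :=
  Real.exp (dotProduct (T.K.mulVec (T.p i (x i))) (T.Q.mulVec T.h))

/-- The output of the transformer on input `x`: it computes the softmax average
`ĥ = (Σ_i e^{⟨K f_i, Q h⟩} f_i) / (Σ_i e^{⟨K f_i, Q h⟩})` and outputs `1` if
`N (h + ĥ) > 0`, and `0` otherwise. -/
noncomputable def Transformer.output {n d : ℕ} {S : Type*} (T : Transformer n d S)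
    (x : Fin n → S) : ℕ :=
  if 0 < T.N (T.h + (∑ i, T.w x i)⁻¹ • ∑ i, T.w x i • T.p i (x i)) then 1 else 0

/-- `IsMLP din dout F m` : the function `F : ℝ^din → ℝ^dout` is computable by a
feedforward circuit composing affine maps over `ℝ` and the coordinatewise ReLU
activation `t ↦ max (t, 0)`, using `m` ReLU gates in total. -/
inductive IsMLP : (din dout : ℕ) → ((Fin din → ℝ) → (Fin dout → ℝ)) → ℕ → Prop
  | affine {din dout : ℕ} (A : Matrix (Fin dout) (Fin din) ℝ) (b : Fin dout → ℝ) :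
      IsMLP din dout (fun x => A.mulVec x + b) 0
  | relu (d : ℕ) : IsMLP d d (fun x i => max (x i) 0) d
  | comp {d₁ d₂ d₃ m₁ m₂ : ℕ} {f : (Fin d₁ → ℝ) → (Fin d₂ → ℝ)}
      {g : (Fin d₂ → ℝ) → (Fin d₃ → ℝ)} :
      IsMLP d₁ d₂ f m₁ → IsMLP d₂ d₃ g m₂ → IsMLP d₁ d₃ (g ∘ f) (m₁ + m₂)

/-- `N : ℝ^d → ℝ` is a ReLU MLP with `m` ReLU neurons. -/
def IsReLUMLP (d m : ℕ) (N : (Fin d → ℝ) → ℝ) : Prop :=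
  ∃ F : (Fin d → ℝ) → (Fin 1 → ℝ), IsMLP d 1 F m ∧ ∀ v, N v = F v 0

/-- The function `SUM₂^{n,m}` (here with the bound `m` left implicit in the type `ℤ`):
it outputs `1` if there exist `i, j` with `a i + a j = 0`, and `0` otherwise. -/
def sum2 {n : ℕ} (a : Fin n → ℤ) : ℕ :=
  if ∃ i j : Fin n, a i + a j = 0 then 1 else 0

/-- Let `n = 2k` with `k ≥ 1`, `d ≥ 1`, and let `p`, `h`, `K`, `Q`, `N` be arbitrary
components of a 1-layer single-token output transformer (alphabet `{-n, …, n}`)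
computing `SUM₂^{n,n}` on all inputs.  For `α ∈ {0,1}^k` let `a_i(α) = 2i` if `α_i = 1`
and `a_i(α) = 1` otherwise, let `f_i = p(i, a_i(α))`, `w_i = e^{⟨K f_i, Q h⟩}`,
`x(α) = Σ_i w_i • f_i` and `s(α) = Σ_i w_i`.  Then the hypothesis class
`{(x, s) ↦ 𝟙[N (h + (x + y)/(s + q)) > 0] : (y, q) ∈ ℝ^d × ℝ}` shatters the `k`
points `(x(e_i), s(e_i))` where `e_i ∈ {0,1}^k` are the standard basis vectors:
for every `β ∈ {0,1}^k` there exist `(y, q)` such that for all `i`,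
`N (h + (x(e_i) + y)/(s(e_i) + q)) > 0` iff `β_i = 1`.  In particular the class has
VC dimension at least `n / 2`. -/
lemma sum_split' {M : Type*} [AddCommMonoid M] (k : ℕ) (g : Fin (2*k) → M) :
    ∑ l, g l = (∑ i : Fin k, g ⟨(i : ℕ), by omega⟩)
      + ∑ i : Fin k, g ⟨k + (i : ℕ), by omega⟩ := by
  have h2 : k + k = 2 * k := by omega
  have h1 := Fin.sum_univ_add (f := fun l : Fin (k + k) => g (Fin.cast h2 l))
  have h0 : ∑ i : Fin (k + k), g (Fin.cast h2 i) = ∑ l, g l :=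
    Fintype.sum_equiv (finCongr h2) _ g (fun l => rfl)
  rw [← h0, h1]
  congr 1

set_option maxHeartbeats 2000000 in
theorem sum2_transformer_shatters
    (k d n : ℕ) (hk : 1 ≤ k) (hd : 1 ≤ d) (hn : n = 2 * k)
    (p : Fin n → {z : ℤ // z ∈ Finset.Icc (-(n : ℤ)) (n : ℤ)} → (Fin d → ℝ))
    (h : Fin d → ℝ) (K Q : Matrix (Fin d) (Fin d) ℝ) (N : (Fin d → ℝ) → ℝ)
    (hT : ∀ x : Fin n → {z : ℤ // z ∈ Finset.Icc (-(n : ℤ)) (n : ℤ)},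
      (Transformer.mk p h K Q N).output x = sum2 (fun i => (x i : ℤ)))
    (a : (Fin k → Bool) → Fin k → {z : ℤ // z ∈ Finset.Icc (-(n : ℤ)) (n : ℤ)})
    (ha : ∀ (α : Fin k → Bool) (i : Fin k),
      (a α i : ℤ) = if α i then 2 * ((i : ℕ) + 1) else 1)
    (f : (Fin k → Bool) → Fin k → (Fin d → ℝ))
    (hf : ∀ (α : Fin k → Bool) (i : Fin k),
      f α i = p ⟨(i : ℕ), by have := i.isLt; omega⟩ (a α i))
    (w : (Fin k → Bool) → Fin k → ℝ)
    (hw : ∀ (α : Fin k → Bool) (i : Fin k),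
      w α i = Real.exp (dotProduct (K.mulVec (f α i)) (Q.mulVec h)))
    (xv : (Fin k → Bool) → (Fin d → ℝ))
    (hxv : ∀ α : Fin k → Bool, xv α = ∑ i, w α i • f α i)
    (sv : (Fin k → Bool) → ℝ)
    (hsv : ∀ α : Fin k → Bool, sv α = ∑ i, w α i) :
    ∀ β : Fin k → Bool, ∃ (y : Fin d → ℝ) (q : ℝ),
      ∀ i : Fin k,
        (0 < N (h + (sv (fun j => decide (j = i)) + q)⁻¹ •
            (xv (fun j => decide (j = i)) + y)) ↔ β i = true) := by
  subst hn
  intro β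
  -- second-half alphabet values
  have hmem : ∀ j : Fin k, (if β j then -(2 * ((j : ℕ) + 1)) else 1 : ℤ)
      ∈ Finset.Icc (-((2 * k : ℕ) : ℤ)) ((2 * k : ℕ) : ℤ) := by
    intro j
    have := j.isLt
    simp only [Finset.mem_Icc]
    split <;> push_cast <;> omega
  set b : Fin k → {z : ℤ // z ∈ Finset.Icc (-((2 * k : ℕ) : ℤ)) ((2 * k : ℕ) : ℤ)} :=
    fun j => ⟨if β j then -(2 * ((j : ℕ) + 1)) else 1, hmem j⟩ with hb
  set F : Fin k → (Fin d → ℝ) := fun j => p ⟨k + (j : ℕ), by have := j.isLt; omega⟩ (b j)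
    with hF
  set W : Fin k → ℝ :=
    fun j => Real.exp (dotProduct (K.mulVec (F j)) (Q.mulVec h)) with hW
  refine ⟨∑ j, W j • F j, ∑ j, W j, fun i => ?_⟩
  set e : Fin k → Bool := fun j => decide (j = i) with he
  set z : Fin (2 * k) → {z : ℤ // z ∈ Finset.Icc (-((2 * k : ℕ) : ℤ)) ((2 * k : ℕ) : ℤ)} :=
    fun l => if hl : (l : ℕ) < k then a e ⟨(l : ℕ), hl⟩
      else b ⟨(l : ℕ) - k, by have := l.isLt; omega⟩ with hz
  set T : Transformer (2 * k) d _ := Transformer.mk p h K Q N with hTdef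
  have hout := hT z
  -- compute sum of weights
  have hS : (∑ l, T.w z l) = sv e + ∑ j, W j := by
    rw [sum_split' k (fun l => T.w z l), hsv]
    congr 1
    · refine Finset.sum_congr rfl fun i' _ => ?_
      have hz' : z ⟨(i' : ℕ), by have := i'.isLt; omega⟩ = a e i' := by
        simp only [hz]
        rw [dif_pos i'.isLt]
      simp only [Transformer.w, hTdef, hz', hw, hf]
    · refine Finset.sum_congr rfl fun i' _ => ?_
      have hz' : z ⟨k + (i' : ℕ), by have := i'.isLt; omega⟩ = b i' := by
        simp only [hz]
        rw [dif_neg (by omega)]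
        congr 1
        exact Fin.ext (by simp)
      simp only [Transformer.w, hTdef, hz', hW, hF]
  -- compute weighted sum of vectors
  have hX : (∑ l, T.w z l • T.p l (z l)) = xv e + ∑ j, W j • F j := by
    rw [sum_split' k (fun l => T.w z l • T.p l (z l)), hxv]
    congr 1
    · refine Finset.sum_congr rfl fun i' _ => ?_
      have hz' : z ⟨(i' : ℕ), by have := i'.isLt; omega⟩ = a e i' := by
        simp only [hz]
        rw [dif_pos i'.isLt]
      simp only [Transformer.w, hTdef, hz', hw, hf]
    · refine Finset.sum_congr rfl fun i' _ => ?_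
      have hz' : z ⟨k + (i' : ℕ), by have := i'.isLt; omega⟩ = b i' := by
        simp only [hz]
        rw [dif_neg (by omega)]
        congr 1
        exact Fin.ext (by simp)
      simp only [Transformer.w, hTdef, hz', hW, hF]
  -- compute sum2 on z
  have hval : ∀ l : Fin (2 * k), ∀ hl : (l : ℕ) < k,
      (z l : ℤ) = if (⟨(l : ℕ), hl⟩ : Fin k) = i then 2 * ((l : ℕ) + 1) else 1 := by
    intro l hl
    simp only [hz]
    rw [dif_pos hl, ha]
    simp [he]
  have hval2 : ∀ l : Fin (2 * k), ∀ hl : ¬ (l : ℕ) < k,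
      (z l : ℤ) = if β ⟨(l : ℕ) - k, by have := l.isLt; omega⟩
        then (-(2 * ((((l : ℕ) - k : ℕ) : ℤ) + 1))) else 1 := by
    intro l hl
    simp only [hz]
    rw [dif_neg hl]
  have hiff : (∃ l m : Fin (2 * k), (z l : ℤ) + (z m : ℤ) = 0) ↔ β i = true := by
    constructor
    · rintro ⟨l, m, hlm⟩
      by_cases hl : (l : ℕ) < k <;> by_cases hm : (m : ℕ) < k
      · rw [hval l hl, hval m hm] at hlm
        split_ifs at hlm <;> omega
      · rw [hval l hl, hval2 m hm] at hlm
        rcases Decidable.em ((⟨(l : ℕ), hl⟩ : Fin k) = i) with h1 | h1 <;>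
          rcases Decidable.em (β ⟨(m : ℕ) - k, by have := m.isLt; omega⟩ = true) with h2 | h2
        · rw [if_pos h1, if_pos h2] at hlm
          have hmk : ((m : ℕ) - k : ℕ) = (l : ℕ) := by omega
          have h3 : (⟨(m : ℕ) - k, by have := m.isLt; omega⟩ : Fin k) = i := by
            rw [← h1]; exact Fin.ext hmk
          rwa [h3] at h2
        · rw [if_pos h1, if_neg h2] at hlm; omega
        · rw [if_neg h1, if_pos h2] at hlm; omega
        · rw [if_neg h1, if_neg h2] at hlm; omega
      · rw [hval2 l hl, hval m hm] at hlm
        rcases Decidable.em ((⟨(m : ℕ), hm⟩ : Fin k) = i) with h1 | h1 <;>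
          rcases Decidable.em (β ⟨(l : ℕ) - k, by have := l.isLt; omega⟩ = true) with h2 | h2
        · rw [if_pos h1, if_pos h2] at hlm
          have hmk : ((l : ℕ) - k : ℕ) = (m : ℕ) := by omega
          have h3 : (⟨(l : ℕ) - k, by have := l.isLt; omega⟩ : Fin k) = i := by
            rw [← h1]; exact Fin.ext hmk
          rwa [h3] at h2
        · rw [if_pos h1, if_neg h2] at hlm; omega
        · rw [if_neg h1, if_pos h2] at hlm; omega
        · rw [if_neg h1, if_neg h2] at hlm; omega
      · rw [hval2 l hl, hval2 m hm] at hlm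
        split_ifs at hlm <;> omega
    · intro hb
      have hi1 : (i : ℕ) < 2 * k := by have := i.isLt; omega
      have hi2 : k + (i : ℕ) < 2 * k := by have := i.isLt; omega
      refine ⟨⟨(i : ℕ), hi1⟩, ⟨k + (i : ℕ), hi2⟩, ?_⟩
      have e1 := hval ⟨(i : ℕ), hi1⟩ i.isLt
      have e2 := hval2 ⟨k + (i : ℕ), hi2⟩ (by show ¬ k + (i : ℕ) < k; omega)
      simp only [Fin.val_mk, Nat.add_sub_cancel_left, Fin.eta, if_true] at e1 e2
      rw [e1, e2, if_pos hb]
      push_cast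
      ring
  have hsum2 : sum2 (fun l => (z l : ℤ)) = if β i = true then 1 else 0 := by
    simp only [sum2, hiff]
  rw [hsum2] at hout
  simp only [Transformer.output, hTdef] at hout
  rw [hS, hX] at hout
  constructor
  · intro h0
    by_contra hb
    rw [if_pos h0, if_neg hb] at hout
    exact one_ne_zero hout
  · intro hb
    by_contra h0
    rw [if_neg h0, if_pos hb] at hout
    exact zero_ne_one hout
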